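/- Let Λ be a finite-dimensional selfinjective k-algebra, Q a finite acyclic quiver, and M a separated monic representation of Q over Λ. Then there exists a short exact sequence 0 → I → M → N → 0 of ΛQ-modules such that I is a projective object in the category of Gorenstein-projective ΛQ-modules and no branch N_i of N has a nonzero projective direct summand. -/

import Mathlib

open Function LinearMap

/-- A representation of the quiver with vertex set `V` and arrow family `E`
over the ring `Λ`: a `Λ`-module at every vertex and a linear map along every arrow. -/
structure QRep (Λ : Type) [Ring Λ] {V : Type} (E : V → V → Type) : Type 1 where
  obj : V → Type
  [acg : ∀ i, AddCommGroup (obj i)]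
  [mod : ∀ i, Module Λ (obj i)]
  map : ∀ {i j : V}, E i j → (obj i →ₗ[Λ] obj j)

attribute [instance] QRep.acg QRep.mod

namespace QRep

variable {Λ : Type} [Ring Λ] {V : Type} {E : V → V → Type}

/-- Morphisms of representations. -/
@[ext]
structure Hom (X Y : QRep Λ E) where
  app : ∀ i, X.obj i →ₗ[Λ] Y.obj i
  comm : ∀ {i j : V} (a : E i j), (Y.map a).comp (app i) = (app j).comp (X.map a)

def Hom.id (X : QRep Λ E) : Hom X X :=
  ⟨fun _ => LinearMap.id, fun _ => by ext; rfl⟩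

def Hom.comp {X Y Z : QRep Λ E} (g : Hom Y Z) (f : Hom X Y) : Hom X Z :=
  ⟨fun i => (g.app i).comp (f.app i), fun {i j} a => by
    ext x
    have h1 := LinearMap.congr_fun (f.comm a) x
    have h2 := LinearMap.congr_fun (g.comm a) (f.app i x)
    simp only [LinearMap.comp_apply] at h1 h2 ⊢
    rw [h2, h1]⟩

def Hom.sub {X Y : QRep Λ E} (f g : Hom X Y) : Hom X Y :=
  ⟨fun i => f.app i - g.app i, fun {i j} a => by
    ext x
    have h1 := LinearMap.congr_fun (f.comm a) x
    have h2 := LinearMap.congr_fun (g.comm a) x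
    simp only [LinearMap.comp_apply, LinearMap.sub_apply, map_sub] at h1 h2 ⊢
    rw [h1, h2]⟩

/-- Two representations are isomorphic. -/
def Iso (X Y : QRep Λ E) : Prop :=
  ∃ f : Hom X Y, ∀ i, Function.Bijective (f.app i)

/-- The assembled map `⊕_{a : j → i} X_j → X_i` at a vertex `i`. -/
noncomputable def uMap (X : QRep Λ E) (i : V) :
    (DirectSum (Σ j : V, E j i) (fun a => X.obj a.1)) →ₗ[Λ] X.obj i := by
  classical exact DirectSum.toModule Λ _ _ (fun a => X.map a.2)

/-- A representation is separated monic if at every vertex the assembled map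
from the direct sum of the incoming branches is injective. -/
def SeparatedMonic (X : QRep Λ E) : Prop :=
  ∀ i : V, Function.Injective (X.uMap i)

/-- Paths in the quiver given by the arrow family `E`. -/
def Path (E : V → V → Type) (i j : V) : Type := @Quiver.Path V ⟨E⟩ i j

/-- The quiver is acyclic: no nontrivial oriented cycles. -/
def Acyclic (E : V → V → Type) : Prop :=
  ∀ i : V, ∀ p : Path E i i, p = @Quiver.Path.nil V ⟨E⟩ i

/-- The representation `P_n(A) = A ⊗ P(n)`: at vertex `i` a copy of `A` for every
path from `n` to `i`. -/
noncomputable def Pn (Λ : Type) [Ring Λ] (E : V → V → Type) (n : V) (A : Type)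
    [AddCommGroup A] [Module Λ A] : QRep Λ E where
  obj i := Path E n i →₀ A
  map {i j} a := Finsupp.lmapDomain A Λ (fun p => @Quiver.Path.cons V ⟨E⟩ n i j p a)

/-- Projectivity of a representation, via the lifting property against
componentwise surjections of representations. -/
def Projective (P : QRep Λ E) : Prop :=
  ∀ (X Y : QRep Λ E) (g : Hom X Y), (∀ i, Function.Surjective (g.app i)) →
    ∀ f : Hom P Y, ∃ f' : Hom P X, g.comp f' = f

/-- A module has no nonzero projective direct summand. -/
def NoProjSummand (Λ : Type) [Ring Λ] (M : Type) [AddCommGroup M] [Module Λ M] : Prop :=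
  ∀ (P C : Type) [AddCommGroup P] [Module Λ P] [AddCommGroup C] [Module Λ C],
    Module.Projective Λ P → Nonempty (M ≃ₗ[Λ] P × C) → Subsingleton P

/-- A module has no nonzero injective direct summand. -/
def NoInjSummand (Λ : Type) [Ring Λ] (M : Type) [AddCommGroup M] [Module Λ M] : Prop :=
  ∀ (P C : Type) [AddCommGroup P] [Module Λ P] [AddCommGroup C] [Module Λ C],
    Module.Injective Λ P → Nonempty (M ≃ₗ[Λ] P × C) → Subsingleton P

/-- A linear map factors through an injective module. -/
def FactorsThroughInjective (Λ : Type) [Ring Λ] {A B : Type}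
    [AddCommGroup A] [Module Λ A] [AddCommGroup B] [Module Λ B] (f : A →ₗ[Λ] B) : Prop :=
  ∃ (J : Type) (_ : AddCommGroup J) (_ : Module Λ J), Module.Injective Λ J ∧
    ∃ (g : A →ₗ[Λ] J) (h : J →ₗ[Λ] B), f = h.comp g

/-- A morphism of representations factors through a projective representation. -/
def FactorsThroughProjective {X Y : QRep Λ E} (f : Hom X Y) : Prop :=
  ∃ (P : QRep Λ E), Projective P ∧ SeparatedMonic P ∧
    ∃ (u : Hom X P) (v : Hom P Y), f = v.comp u

/-- Stable isomorphism: isomorphism in the stable category of Gorenstein-projective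
representations modulo projectives. -/
def StIso (X Y : QRep Λ E) : Prop :=
  ∃ (f : Hom X Y) (g : Hom Y X),
    FactorsThroughProjective ((g.comp f).sub (Hom.id X)) ∧
    FactorsThroughProjective ((f.comp g).sub (Hom.id Y))

/-- `e : M →ₗ J` is an injective envelope: `J` is injective, `e` is injective and
its image is essential in `J`. -/
def IsInjEnvelope {M J : Type} [AddCommGroup M] [Module Λ M] [AddCommGroup J]
    [Module Λ J] (e : M →ₗ[Λ] J) : Prop :=
  Module.Injective Λ J ∧ Function.Injective e ∧
    ∀ W : Submodule Λ J, Disjoint W (LinearMap.range e) → W = ⊥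

end QRep
section MonoACons

variable {Λ : Type} [Ring Λ] {V : Type} {E : V → V → Type}

open QRep

namespace QRep

open Classical in
/-- The map `E_β` in the `Mono_α` construction: it is `single nil ∘ e` when `β = α`
and zero otherwise. -/
noncomputable def EMap (M : QRep Λ E) {v w : V} (α : E v w) {J : Type} [AddCommGroup J]
    [Module Λ J] (e : M.obj v →ₗ[Λ] J) {i j : V} (β : E i j) :
    M.obj i →ₗ[Λ] (Path E w j →₀ J) :=
  if h : (⟨i, ⟨j, β⟩⟩ : Σ a : V, Σ b : V, E a b) = ⟨v, ⟨w, α⟩⟩ then by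
    obtain ⟨h1, h2⟩ := Sigma.mk.inj_iff.mp h
    subst h1
    obtain ⟨h3, _⟩ := Sigma.mk.inj_iff.mp (eq_of_heq h2)
    subst h3
    exact (Finsupp.lsingle (R := Λ) (M := J) (@Quiver.Path.nil V ⟨E⟩ _)).comp e
  else 0

/-- The construction `Mono_α(M)`: the middle term of the componentwise split short
exact sequence `0 → P_w(J) → Mono_α(M) → M → 0` twisted by `e` at the arrow `α`. -/
noncomputable def MonoA (M : QRep Λ E) {v w : V} (α : E v w) {J : Type} [AddCommGroup J]
    [Module Λ J] (e : M.obj v →ₗ[Λ] J) : QRep Λ E where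
  obj i := M.obj i × (Path E w i →₀ J)
  map {i j} β := LinearMap.prod
    ((M.map β).comp (LinearMap.fst Λ _ _))
    ((Finsupp.lmapDomain J Λ (fun p => @Quiver.Path.cons V ⟨E⟩ w i j p β)).comp
        (LinearMap.snd Λ _ _)
      + (EMap M α e β).comp (LinearMap.fst Λ _ _))

/-- The canonical projection `Mono_α(M) → M`. -/
noncomputable def MonoAProj (M : QRep Λ E) {v w : V} (α : E v w) {J : Type} [AddCommGroup J]
    [Module Λ J] (e : M.obj v →ₗ[Λ] J) : Hom (MonoA M α e) M :=
  ⟨fun _ => LinearMap.fst Λ _ _, fun {i j} β => by ext x; rfl⟩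

/-- `IsMonoIter L M N π` holds when `N`, together with the projection `π : N → M`,
is obtained from `M` by successively applying the `Mono` construction at the arrows in
the list `L` (the head of `L` applied last), each time using an injective envelope. -/
inductive IsMonoIter : ∀ (L : List (Σ i : V, Σ j : V, E i j)) (M N : QRep Λ E), Hom N M → Prop
  | nil (M : QRep Λ E) : IsMonoIter [] M M (Hom.id M)
  | cons {L : List (Σ i : V, Σ j : V, E i j)} {M N : QRep Λ E} {π : Hom N M} {v w : V}
      (α : E v w) {J : Type} [AddCommGroup J] [Module Λ J] (e : N.obj v →ₗ[Λ] J)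
      (henv : IsInjEnvelope e) (h : IsMonoIter L M N π) :
      IsMonoIter (⟨v, ⟨w, α⟩⟩ :: L) M (MonoA N α e) (π.comp (MonoAProj N α e))

/-- `π : G → M` is a right approximation of `M` in the category of
Gorenstein-projective (= separated monic) representations. -/
def IsRightApprox {G M : QRep Λ E} (π : Hom G M) : Prop :=
  SeparatedMonic G ∧
    ∀ G' : QRep Λ E, SeparatedMonic G' → ∀ f : Hom G' M, ∃ g : Hom G' G, π.comp g = f

/-- `π : A → M` is the minimal right approximation of `M` in Gproj. -/
def IsMimo {M A : QRep Λ E} (π : Hom A M) : Prop :=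
  IsRightApprox π ∧ ∀ φ : Hom A A, π.comp φ = π → ∀ i, Function.Bijective (φ.app i)

end QRep
end MonoACons
namespace QRep

variable {Λ : Type} [Ring Λ] {V : Type} {E : V → V → Type}

/-- The reflected quiver `Q(v)`: every arrow ending at `v` is reversed. An arrow
`i → j` of `Q(v)` is either an arrow `i → j` of `Q` with `j ≠ v`, or the reversal
of an arrow `j → v` of `Q` (in which case `i = v`). -/
def reflE (E : V → V → Type) (v : V) : V → V → Type :=
  fun i j => {a : E i j // j ≠ v} ⊕ (PLift (i = v) × E j v)

/-- The representation `X'(v)` of the reflected quiver: the branch at `v` is replaced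
by `Ω`, the structure maps at the reversed arrows being the components of `kmap`. -/
noncomputable def reflRep (X : QRep Λ E) (v : V) (hsink : ∀ j, IsEmpty (E v j))
    (Ω : Type) [AddCommGroup Ω] [Module Λ Ω]
    (kmap : Ω →ₗ[Λ] DirectSum (Σ j : V, E j v) (fun a => X.obj a.1)) :
    QRep Λ (reflE E v) where
  obj i := (PLift (i = v) → Ω) × (PLift (i ≠ v) → X.obj i)
  map {i j} a :=
    match a with
    | Sum.inl ⟨a, _⟩ => LinearMap.prod 0
        (LinearMap.pi fun _ : PLift (j ≠ v) =>
          (X.map a).comp ((LinearMap.proj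
            (⟨fun h => (hsink j).false (h ▸ a)⟩ : PLift (i ≠ v))).comp
              (LinearMap.snd Λ _ _)))
    | Sum.inr ⟨hiv, a⟩ => LinearMap.prod 0
        (LinearMap.pi fun _ : PLift (j ≠ v) =>
          (((DirectSum.component Λ (Σ j : V, E j v) (fun b => X.obj b.1) ⟨j, a⟩).comp
              kmap).comp ((LinearMap.proj hiv).comp (LinearMap.fst Λ _ _))))

/-- The reflection relation: `Z` is (the result of) the reflection `X(v)` of the
Gorenstein-projective representation `X` at the sink `v`; it is obtained from the
representation `X'(v)` (defined via a projective cover `δ : C → coker u_X` with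
kernel `Ω` and the lifted kernel map `kmap`) by the `Mono` construction at all
reversed arrows. -/
def IsReflectionAt (X : QRep Λ E) (v : V) (hsink : ∀ j, IsEmpty (E v j))
    (Z : QRep Λ (reflE E v)) : Prop :=
  ∃ (Xbar : Type) (_ : AddCommGroup Xbar) (_ : Module Λ Xbar) (πc : X.obj v →ₗ[Λ] Xbar)
    (C : Type) (_ : AddCommGroup C) (_ : Module Λ C) (δ : C →ₗ[Λ] Xbar)
    (kmap : ↥(LinearMap.ker δ) →ₗ[Λ] DirectSum (Σ j : V, E j v) (fun a => X.obj a.1))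
    (t : C →ₗ[Λ] X.obj v),
    Function.Surjective πc ∧ LinearMap.ker πc = LinearMap.range (X.uMap v) ∧
    Module.Projective Λ C ∧ Function.Surjective δ ∧
    (∀ W : Submodule Λ C, W ⊔ LinearMap.ker δ = ⊤ → W = ⊤) ∧
    πc.comp t = δ ∧ (X.uMap v).comp kmap = t.comp (LinearMap.ker δ).subtype ∧
    ∃ (L : List (Σ i : V, Σ j : V, reflE E v i j))
      (π : Hom Z (reflRep X v hsink (↥(LinearMap.ker δ)) kmap)),
      (∀ x ∈ L, x.1 = v) ∧ L.Nodup ∧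
      (∀ (j : V) (a : E j v),
        (⟨v, j, Sum.inr ⟨⟨rfl⟩, a⟩⟩ : Σ i : V, Σ j : V, reflE E v i j) ∈ L) ∧
      IsMonoIter L (reflRep X v hsink (↥(LinearMap.ker δ)) kmap) Z π

/-- Transport of a representation along a family of bijections of arrow types. -/
def transport {E' : V → V → Type} (σ : ∀ i j, E i j ≃ E' i j) (X : QRep Λ E) :
    QRep Λ E' where
  obj := X.obj
  map {i j} a := X.map ((σ i j).symm a)

/-- `A'` is a (representation-level) syzygy of `A` in the Frobenius category of
Gorenstein-projective representations. -/
def IsSyzRep (A' A : QRep Λ E) : Prop :=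
  ∃ (P : QRep Λ E) (ι : Hom A' P) (π : Hom P A), Projective P ∧ SeparatedMonic P ∧
    (∀ i, Function.Injective (ι.app i)) ∧ (∀ i, Function.Surjective (π.app i)) ∧
    (∀ i, LinearMap.range (ι.app i) = LinearMap.ker (π.app i))

/-- `C` is a double syzygy `Ω²(A)`. -/
def IsOmega2 (A C : QRep Λ E) : Prop :=
  ∃ A', IsSyzRep A' A ∧ IsSyzRep C A'

end QRep

open CategoryTheory

/-- The category of Gorenstein-projective (= separated monic) representations. -/
def GP (Λ : Type) [Ring Λ] {V : Type} (E : V → V → Type) : Type 1 :=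
  {X : QRep Λ E // QRep.SeparatedMonic X}

instance (Λ : Type) [Ring Λ] {V : Type} (E : V → V → Type) :
    Category (GP Λ E) where
  Hom X Y := QRep.Hom X.1 Y.1
  id X := QRep.Hom.id X.1
  comp f g := g.comp f
  id_comp f := by apply QRep.Hom.ext; funext i; exact LinearMap.comp_id _
  comp_id f := by apply QRep.Hom.ext; funext i; exact LinearMap.id_comp _
  assoc f g h := by apply QRep.Hom.ext; funext i; rfl

/-- The relation identifying two morphisms whose difference factors through a
projective object. -/
def stRel (Λ : Type) [Ring Λ] {V : Type} (E : V → V → Type) : HomRel (GP Λ E) :=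
  fun {X Y} f g => QRep.FactorsThroughProjective (f.sub g)

/-- The stable category of Gorenstein-projective representations modulo projectives. -/
def StableGP (Λ : Type) [Ring Λ] {V : Type} (E : V → V → Type) : Type 1 :=
  CategoryTheory.Quotient (stRel Λ E)

noncomputable instance (Λ : Type) [Ring Λ] {V : Type} (E : V → V → Type) :
    Category (StableGP Λ E) :=
  inferInstanceAs (Category (CategoryTheory.Quotient (stRel Λ E)))

/-! ### Auxiliary module-theoretic lemmas -/

namespace SESAux

open Submodule

variable {Λ : Type} [Ring Λ]

theorem injective_of_retract {M N : Type} [AddCommGroup M] [Module Λ M]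
    [AddCommGroup N] [Module Λ N] (hN : Module.Injective Λ N)
    (s : M →ₗ[Λ] N) (r : N →ₗ[Λ] M) (hrs : ∀ x, r (s x) = x) :
    Module.Injective Λ M := by
  constructor
  intro X Y _ _ _ _ f hf g
  obtain ⟨h, hh⟩ := hN.out f hf (s.comp g)
  exact ⟨r.comp h, fun x => by
    simp only [LinearMap.comp_apply] at hh ⊢
    rw [hh x, hrs]⟩

theorem injective_of_equiv {M N : Type} [AddCommGroup M] [Module Λ M]
    [AddCommGroup N] [Module Λ N] (e : M ≃ₗ[Λ] N) (hN : Module.Injective Λ N) :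
    Module.Injective Λ M :=
  injective_of_retract hN (e : M →ₗ[Λ] N) (e.symm : N →ₗ[Λ] M) (fun x => e.symm_apply_apply x)

theorem injective_pi {ι : Type} {N : ι → Type} [∀ i, AddCommGroup (N i)]
    [∀ i, Module Λ (N i)] (h : ∀ i, Module.Injective Λ (N i)) :
    Module.Injective Λ (∀ i, N i) := by
  constructor
  intro X Y _ _ _ _ f hf g
  have H : ∀ i, ∃ hi : Y →ₗ[Λ] N i, ∀ x, hi (f x) = (LinearMap.proj i).comp g x :=
    fun i => (h i).out f hf ((LinearMap.proj i).comp g)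
  choose hs hspec using H
  exact ⟨LinearMap.pi hs, fun x => by ext i; exact hspec i x⟩

theorem injective_of_fg_projective (hself : Module.Injective Λ Λ) {P : Type}
    [AddCommGroup P] [Module Λ P] (hfg : Module.Finite Λ P) (hP : Module.Projective Λ P) :
    Module.Injective Λ P := by
  obtain ⟨n, π, hπ⟩ := Module.Finite.exists_fin' Λ P
  obtain ⟨s, hs⟩ := Module.projective_lifting_property π LinearMap.id hπ
  exact injective_of_retract (injective_pi (fun _ : Fin n => hself)) s π
    (fun x => LinearMap.congr_fun hs x)

theorem noProjSummand_of_equiv {M N : Type} [AddCommGroup M] [Module Λ M]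
    [AddCommGroup N] [Module Λ N] (e : M ≃ₗ[Λ] N) (h : QRep.NoProjSummand Λ N) :
    QRep.NoProjSummand Λ M := by
  intro P C _ _ _ _ hP hne
  obtain ⟨f⟩ := hne
  exact h P C hP ⟨e.symm.trans f⟩

theorem projective_of_subsingleton {P : Type} [AddCommGroup P] [Module Λ P]
    [Subsingleton P] : Module.Projective Λ P :=
  Module.Projective.of_split (0 : P →ₗ[Λ] Λ) 0 (by ext x; exact Subsingleton.elim _ _)

/-- The sum of two disjoint submodules is isomorphic to their product. -/
noncomputable def supEquivProd {X : Type} [AddCommGroup X] [Module Λ X]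
    {p q : Submodule Λ X} (hd : p ⊓ q = ⊥) : ↥(p ⊔ q) ≃ₗ[Λ] ↥p × ↥q := by
  refine (LinearEquiv.ofBijective
    ((Submodule.inclusion (le_sup_left : p ≤ p ⊔ q)).coprod
     (Submodule.inclusion (le_sup_right : q ≤ p ⊔ q))) ⟨?_, ?_⟩).symm
  · rintro ⟨⟨a, ha⟩, ⟨b, hb⟩⟩ ⟨⟨c, hc⟩, ⟨d, hd'⟩⟩ hab
    have h1 : a + b = c + d := by
      simpa [Submodule.inclusion] using congrArg Subtype.val hab
    have h2 : a - c = d - b := by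
      rw [sub_eq_sub_iff_add_eq_add, h1]
      exact add_comm _ _
    have hmem : a - c ∈ p ⊓ q := ⟨sub_mem ha hc, h2 ▸ sub_mem hd' hb⟩
    rw [hd] at hmem
    have hac : a - c = 0 := (Submodule.mem_bot Λ).mp hmem
    have hdb : d - b = 0 := by rw [← h2]; exact hac
    simp only [Prod.mk.injEq]
    exact ⟨Subtype.ext (sub_eq_zero.mp hac), Subtype.ext (sub_eq_zero.mp hdb).symm⟩
  · rintro ⟨x, hx⟩
    rcases Submodule.mem_sup.mp hx with ⟨a, ha, b, hb, rfl⟩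
    refine ⟨(⟨a, ha⟩, ⟨b, hb⟩), ?_⟩
    apply Subtype.ext
    simp [Submodule.inclusion]

theorem exists_isCompl_of_injective {X : Type} [AddCommGroup X] [Module Λ X]
    (U : Submodule Λ X) (hU : Module.Injective Λ ↥U) : ∃ W, IsCompl U W := by
  obtain ⟨r, hr⟩ := hU.out U.subtype Subtype.val_injective LinearMap.id
  refine ⟨LinearMap.ker (U.subtype.comp r), ⟨?_, ?_⟩⟩
  · rw [disjoint_iff]
    apply (Submodule.eq_bot_iff _).mpr
    rintro x ⟨hxU, hxker⟩
    have h1 : r x = ⟨x, hxU⟩ := hr ⟨x, hxU⟩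
    have h2 : U.subtype (r x) = 0 := hxker
    rw [h1] at h2
    exact h2
  · rw [codisjoint_iff, eq_top_iff]
    intro x _
    have hk : x - U.subtype (r x) ∈ LinearMap.ker (U.subtype.comp r) := by
      simp only [LinearMap.mem_ker, LinearMap.comp_apply, map_sub]
      rw [hr (r x)]
      simp
    have : x = U.subtype (r x) + (x - U.subtype (r x)) := by abel
    rw [this]
    exact add_mem_sup (Submodule.coe_mem (r x)) hk

theorem noProjSummand_of_internal {X : Type} [AddCommGroup X] [Module Λ X]
    (W : Submodule Λ X)
    (h : ∀ B R : Submodule Λ X, B ≤ W → R ≤ W → B ⊓ R = ⊥ → B ⊔ R = W →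
      Module.Projective Λ ↥B → B = ⊥) :
    QRep.NoProjSummand Λ ↥W := by
  intro P C _ _ _ _ hP hne
  obtain ⟨e⟩ := hne
  set f : P →ₗ[Λ] X := W.subtype ∘ₗ (e.symm : P × C →ₗ[Λ] ↥W) ∘ₗ LinearMap.inl Λ P C with hf
  set g : C →ₗ[Λ] X := W.subtype ∘ₗ (e.symm : P × C →ₗ[Λ] ↥W) ∘ₗ LinearMap.inr Λ P C with hg
  have hfinj : Function.Injective f := by
    intro a b hab
    have : (⟨a, 0⟩ : P × C) = ⟨b, 0⟩ :=
      e.symm.injective (Subtype.val_injective hab)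
    exact (Prod.mk.injEq _ _ _ _).mp this |>.1
  have hBW : LinearMap.range f ≤ W := by
    rintro x ⟨y, rfl⟩; exact Submodule.coe_mem _
  have hRW : LinearMap.range g ≤ W := by
    rintro x ⟨y, rfl⟩; exact Submodule.coe_mem _
  have hinf : LinearMap.range f ⊓ LinearMap.range g = ⊥ := by
    apply (Submodule.eq_bot_iff _).mpr
    rintro x ⟨⟨p, hp⟩, ⟨c, hc⟩⟩
    have : e.symm ⟨p, 0⟩ = e.symm ⟨0, c⟩ := Subtype.val_injective (hp.trans hc.symm)
    have h2 : (⟨p, 0⟩ : P × C) = ⟨0, c⟩ := e.symm.injective this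
    have hp0 : p = 0 := ((Prod.mk.injEq _ _ _ _).mp h2).1
    rw [← hp, hp0]
    simp
  have hsup : LinearMap.range f ⊔ LinearMap.range g = W := by
    apply le_antisymm (sup_le hBW hRW)
    rintro x hx
    have hd : (⟨x, hx⟩ : ↥W) = e.symm ⟨(e ⟨x, hx⟩).1, 0⟩ + e.symm ⟨0, (e ⟨x, hx⟩).2⟩ := by
      rw [← map_add]
      congr 1
      simp
    have : x = f (e ⟨x, hx⟩).1 + g (e ⟨x, hx⟩).2 := by
      have := congrArg Subtype.val hd
      simpa [hf, hg] using this
    rw [this]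
    exact add_mem_sup (LinearMap.mem_range_self _ _) (LinearMap.mem_range_self _ _)
  haveI := hP
  have hproj : Module.Projective Λ ↥(LinearMap.range f) :=
    Module.Projective.of_equiv (LinearEquiv.ofInjective f hfinj)
  have hbot := h _ _ hBW hRW hinf hsup hproj
  have : Subsingleton ↥(LinearMap.range f) := by rw [hbot]; infer_instance
  exact (LinearEquiv.ofInjective f hfinj).toEquiv.subsingleton

theorem artinian_decomp {X : Type} [AddCommGroup X] [Module Λ X] [IsArtinian Λ X]
    (W : Submodule Λ X) :
    ∃ B R : Submodule Λ X, B ≤ W ∧ R ≤ W ∧ B ⊓ R = ⊥ ∧ B ⊔ R = W ∧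
      Module.Projective Λ ↥B ∧ QRep.NoProjSummand Λ ↥R := by
  induction W using WellFoundedLT.induction with
  | _ W IH =>
  by_cases h : ∀ B R : Submodule Λ X, B ≤ W → R ≤ W → B ⊓ R = ⊥ → B ⊔ R = W →
      Module.Projective Λ ↥B → B = ⊥
  · exact ⟨⊥, W, bot_le, le_rfl, by simp, by simp, projective_of_subsingleton,
      noProjSummand_of_internal W h⟩
  · push_neg at h
    obtain ⟨B, R, hBW, hRW, hdis, hsup, hproj, hBne⟩ := h
    have hRlt : R < W := by
      rcases lt_or_eq_of_le hRW with h' | h'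
      · exact h'
      · exfalso
        apply hBne
        have : B ⊓ R = B := inf_eq_left.mpr (h' ▸ hBW)
        rw [← this, hdis]
    obtain ⟨B₂, R₂, hB₂, hR₂, hdis₂, hsup₂, hproj₂, hnps₂⟩ := IH R hRlt
    have hBB₂ : B ⊓ B₂ = ⊥ :=
      le_bot_iff.mp (le_trans (inf_le_inf_left B hB₂) hdis.le)
    refine ⟨B ⊔ B₂, R₂, sup_le hBW (hB₂.trans hRW), hR₂.trans hRW, ?_, ?_, ?_, hnps₂⟩
    · apply le_bot_iff.mp
      calc (B ⊔ B₂) ⊓ R₂ ≤ ((B₂ ⊔ B) ⊓ R) ⊓ R₂ :=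
            le_inf (le_inf (inf_le_left.trans (sup_comm B B₂).le)
              (inf_le_right.trans hR₂)) inf_le_right
        _ = (B₂ ⊔ (B ⊓ R)) ⊓ R₂ := by rw [sup_inf_assoc_of_le _ hB₂]
        _ = B₂ ⊓ R₂ := by rw [hdis, sup_bot_eq]
        _ = ⊥ := hdis₂
    · rw [sup_assoc, hsup₂, hsup]
    · haveI := hproj
      haveI := hproj₂
      exact Module.Projective.of_equiv (supEquivProd hBB₂).symm

theorem exists_spec {X : Type} [AddCommGroup X] [Module Λ X] [IsArtinian Λ X]
    (U : Submodule Λ X) (hU : ∃ W, IsCompl U W) :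
    ∃ Bn : Submodule Λ X, Module.Projective Λ ↥Bn ∧ U ⊓ Bn = ⊥ ∧
      ∃ R, IsCompl (U ⊔ Bn) R ∧ QRep.NoProjSummand Λ ↥R := by
  obtain ⟨W, hW⟩ := hU
  obtain ⟨B, R, hBW, hRW, hdis, hsup, hproj, hnps⟩ := artinian_decomp W
  have hUW : U ⊓ W = ⊥ := disjoint_iff.mp hW.disjoint
  refine ⟨B, hproj, ?_, R, ⟨?_, ?_⟩, hnps⟩
  · apply le_bot_iff.mp
    calc U ⊓ B ≤ U ⊓ W := inf_le_inf_left _ hBW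
      _ = ⊥ := hUW
  · rw [disjoint_iff]
    have hR' : W ⊓ R = R := inf_eq_right.mpr hRW
    calc (U ⊔ B) ⊓ R = ((U ⊔ B) ⊓ W) ⊓ R := by rw [inf_assoc, hR']
      _ = (B ⊔ U ⊓ W) ⊓ R := by rw [sup_comm U B, sup_inf_assoc_of_le _ hBW]
      _ = B ⊓ R := by rw [hUW, sup_bot_eq]
      _ = ⊥ := hdis
  · rw [codisjoint_iff, sup_assoc, hsup]
    exact codisjoint_iff.mp hW.codisjoint

end SESAux


/-! ### Paths in a finite acyclic quiver -/

namespace SESAux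

open Quiver

open scoped Classical

section Paths

variable {V : Type} [Quiver.{0} V]

/-- Rank of a vertex: number of vertices admitting a path into it. -/
noncomputable def ρ [Fintype V] (n : V) : ℕ :=
  Fintype.card {m : V // Nonempty (Path m n)}

variable (hacyc : ∀ (i : V) (p : Quiver.Path i i), p = Quiver.Path.nil)

include hacyc

theorem ρ_lt [Fintype V] {j n : V} (hp : Nonempty (Path j n)) (hne : j ≠ n) :
    ρ j < ρ n := by
  obtain ⟨p⟩ := hp
  have hplen : p.length ≠ 0 := fun h0 => hne (Quiver.Path.eq_of_length_zero p h0)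
  have key : ¬ Nonempty (Path n j) := by
    rintro ⟨q⟩
    have h0 := hacyc n (q.comp p)
    have hlen := congrArg Quiver.Path.length h0
    rw [Quiver.Path.length_comp] at hlen
    simp only [Quiver.Path.length_nil] at hlen
    omega
  apply Fintype.card_lt_of_injective_of_notMem
    (f := fun x : {m : V // Nonempty (Path m j)} =>
      (⟨x.1, x.2.map (fun q => q.comp p)⟩ : {m : V // Nonempty (Path m n)}))
    (fun a b hab => Subtype.ext (by simpa using congrArg Subtype.val hab))
    (b := ⟨n, ⟨Quiver.Path.nil⟩⟩)
  rintro ⟨⟨m, hm⟩, hEq⟩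
  have : m = n := congrArg Subtype.val hEq
  subst this
  exact key hm

theorem ne_of_hom {j n : V} (β : j ⟶ n) : j ≠ n := by
  rintro rfl
  have := congrArg Quiver.Path.length (hacyc j β.toPath)
  simp [Quiver.Hom.toPath] at this

theorem ne_of_path_hom {m j n : V} (p : Path m j) (β : j ⟶ n) : m ≠ n := by
  rintro rfl
  have := congrArg Quiver.Path.length (hacyc m (p.cons β))
  simp at this

theorem length_le_rho [Fintype V] {m n : V} (p : Path m n) : p.length ≤ ρ n := by
  induction p with
  | nil => simp
  | @cons j n p' β ih =>
    have hlt : ρ j < ρ n := ρ_lt hacyc ⟨β.toPath⟩ (ne_of_hom hacyc β)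
    simp only [Quiver.Path.length_cons]
    omega

omit hacyc

/-- The list of arrows of a path (in reverse order). -/
def arrows : ∀ {m n : V}, Path m n → List (Σ i : V, Σ j : V, i ⟶ j)
  | _, _, .nil => []
  | _, _, @Quiver.Path.cons _ _ _ j _ q β => ⟨j, _, β⟩ :: arrows q

theorem arrows_length {m n : V} (p : Path m n) : (arrows p).length = p.length := by
  induction p with
  | nil => simp [arrows]
  | cons q β ih => simp [arrows, ih]

theorem arrows_injective {m : V} : ∀ {n : V} (p q : Path m n),
    arrows p = arrows q → p = q := by
  intro n p
  induction p with
  | nil =>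
    intro q h
    cases q with
    | nil => rfl
    | cons q' β => simp [arrows] at h
  | @cons j n p' β ih =>
    intro q h
    cases q with
    | nil => simp [arrows] at h
    | @cons j' _ q' β' =>
      simp only [arrows, List.cons.injEq] at h
      obtain ⟨h1, h2⟩ := h
      obtain ⟨rfl, h3⟩ := Sigma.mk.inj_iff.mp h1
      obtain ⟨-, h4⟩ := Sigma.mk.inj_iff.mp (eq_of_heq h3)
      obtain rfl := eq_of_heq h4
      rw [ih q' h2]

include hacyc

theorem path_finite [Fintype V] [∀ i j : V, Finite (i ⟶ j)] (m n : V) :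
    Finite (Path m n) := by
  haveI : Fintype ((i : V) × (j : V) × (i ⟶ j)) := Fintype.ofFinite _
  apply Finite.of_injective
    (f := fun p : Path m n => (fun i : Fin (ρ n + 1) => (arrows p)[(i : ℕ)]?))
  intro p q h
  apply arrows_injective
  apply List.ext_getElem?
  intro i
  by_cases hi : i < ρ n + 1
  · exact congrFun h ⟨i, hi⟩
  · rw [List.getElem?_eq_none, List.getElem?_eq_none]
    · rw [arrows_length]
      have := length_le_rho hacyc q
      omega
    · rw [arrows_length]
      have := length_le_rho hacyc p
      omega

/-- The predecessor relation: existence of a nontrivial path. -/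
def relV (m n : V) : Prop := m ≠ n ∧ Nonempty (Path m n)

theorem relV_wf [Fintype V] : WellFounded (relV (V := V)) :=
  Subrelation.wf (fun {a b} h => ρ_lt hacyc h.2 h.1) (InvImage.wf ρ Nat.lt_wfRel.wf)

theorem relV_of_hom {j n : V} (β : j ⟶ n) : relV j n :=
  ⟨ne_of_hom hacyc β, ⟨β.toPath⟩⟩

theorem relV_of_path_hom {m j n : V} (p : Path m j) (β : j ⟶ n) : relV m n :=
  ⟨ne_of_path_hom hacyc p β, ⟨p.cons β⟩⟩

end Paths

end SESAux


/-! ### The free (projective) representation on a family of modules -/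

namespace SESAux

section FreeRep

open Quiver DirectSum

open scoped Classical

variable {Λ : Type} [Ring Λ] {V : Type} [Quiver.{0} V]

/-- The action of a path in a representation. -/
noncomputable def pathMap (X : QRep Λ fun i j : V => i ⟶ j) :
    ∀ {m i : V}, Path m i → (X.obj m →ₗ[Λ] X.obj i)
  | _, _, .nil => LinearMap.id
  | _, _, .cons p β => (X.map β).comp (pathMap X p)

@[simp] theorem pathMap_nil (X : QRep Λ fun i j : V => i ⟶ j) (m : V) :
    pathMap X (Path.nil : Path m m) = LinearMap.id := by simp [pathMap]

theorem pathMap_cons (X : QRep Λ fun i j : V => i ⟶ j) {m j i : V}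
    (p : Path m j) (β : j ⟶ i) :
    pathMap X (p.cons β) = (X.map β).comp (pathMap X p) := by simp [pathMap]

theorem hom_pathMap {X Y : QRep Λ fun i j : V => i ⟶ j} (f : QRep.Hom X Y)
    {m i : V} (p : Path m i) (x : X.obj m) :
    f.app i (pathMap X p x) = pathMap Y p (f.app m x) := by
  induction p with
  | nil => simp
  | @cons j i q β ih =>
    have hc := LinearMap.congr_fun (f.comm β) (pathMap X q x)
    simp only [LinearMap.comp_apply] at hc
    rw [pathMap_cons, pathMap_cons]
    simp only [LinearMap.comp_apply]
    rw [← hc, ih]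

variable (A : V → Type) [∀ n, AddCommGroup (A n)] [∀ n, Module Λ (A n)]

/-- The free representation on the family `A`. -/
noncomputable def freeRep : QRep Λ fun i j : V => i ⟶ j where
  obj i := ⨁ σ : Σ m : V, Path m i, A σ.1
  map {i j} β := DirectSum.toModule Λ _ _ fun σ =>
    DirectSum.lof Λ (Σ m : V, Path m j) (fun σ => A σ.1) ⟨σ.1, σ.2.cons β⟩

/-- The canonical generators. -/
noncomputable def gen (i : V) (σ : Σ m : V, Path m i) :
    A σ.1 →ₗ[Λ] (freeRep (Λ := Λ) A).obj i :=
  DirectSum.lof Λ (Σ m : V, Path m i) (fun σ => A σ.1) σ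

theorem freeRep_map_lof {i j : V} (β : i ⟶ j) (m : V) (p : Path m i) (x : A m) :
    (freeRep (Λ := Λ) A).map β (gen A i ⟨m, p⟩ x) = gen A j ⟨m, p.cons β⟩ x :=
  DirectSum.toModule_lof (N := ⨁ σ : Σ m : V, Path m j, A σ.1) Λ _ _

/-- Assembling a morphism out of the free representation. -/
noncomputable def assembleApp (X : QRep Λ fun i j : V => i ⟶ j)
    (χ : ∀ n, A n →ₗ[Λ] X.obj n) (i : V) :
    (freeRep (Λ := Λ) A).obj i →ₗ[Λ] X.obj i :=
  DirectSum.toModule Λ _ _ fun σ => (pathMap X σ.2).comp (χ σ.1)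

theorem assembleApp_lof (X : QRep Λ fun i j : V => i ⟶ j)
    (χ : ∀ n, A n →ₗ[Λ] X.obj n) (i : V) (σ : Σ m : V, Path m i) (x : A σ.1) :
    assembleApp A X χ i (gen A i σ x) = pathMap X σ.2 (χ σ.1 x) :=
  DirectSum.toModule_lof Λ _ _

/-- `assembleApp` is a morphism of representations. -/
noncomputable def assembleHom (X : QRep Λ fun i j : V => i ⟶ j)
    (χ : ∀ n, A n →ₗ[Λ] X.obj n) : QRep.Hom (freeRep (Λ := Λ) A) X where
  app := assembleApp A X χ
  comm {i j} β := by
    apply DirectSum.linearMap_ext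
    intro σ
    ext x
    obtain ⟨m, p⟩ := σ
    show X.map β (assembleApp A X χ i (gen A i ⟨m, p⟩ x))
        = assembleApp A X χ j ((freeRep (Λ := Λ) A).map β (gen A i ⟨m, p⟩ x))
    rw [assembleApp_lof, freeRep_map_lof, assembleApp_lof, pathMap_cons]
    rfl

theorem hom_app_gen {X : QRep Λ fun i j : V => i ⟶ j}
    (u : QRep.Hom (freeRep (Λ := Λ) A) X) {m : V} :
    ∀ {i : V} (p : Path m i) (x : A m),
      u.app i (gen A i ⟨m, p⟩ x) = pathMap X p (u.app m (gen A m ⟨m, Path.nil⟩ x)) := by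
  intro i p
  induction p with
  | nil => intro x; simp
  | @cons j i q β ih =>
    intro x
    rw [← freeRep_map_lof]
    have hc := LinearMap.congr_fun (u.comm β) (gen A j ⟨m, q⟩ x)
    simp only [LinearMap.comp_apply] at hc
    rw [← hc, ih x, pathMap_cons]
    rfl

/-- The free representation on projective modules is a projective representation. -/
theorem freeRep_projective (hA : ∀ n, Module.Projective Λ (A n)) :
    QRep.Projective (freeRep (Λ := Λ) A) := by
  intro X Y g hg f
  have hex : ∀ n, ∃ χn : A n →ₗ[Λ] X.obj n,
      (g.app n).comp χn = (f.app n).comp (gen A n ⟨n, Path.nil⟩) := by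
    intro n
    haveI := hA n
    exact Module.projective_lifting_property (g.app n) _ (hg n)
  choose χ hχ using hex
  refine ⟨assembleHom A X χ, ?_⟩
  apply QRep.Hom.ext
  funext i
  apply DirectSum.linearMap_ext
  intro σ
  ext x
  obtain ⟨m, p⟩ := σ
  show (g.app i) (assembleApp A X χ i (gen A i ⟨m, p⟩ x)) = f.app i (gen A i ⟨m, p⟩ x)
  rw [assembleApp_lof, hom_pathMap g, hom_app_gen A f]
  congr 1
  exact LinearMap.congr_fun (hχ m) x

/-- The component of the canonical decomposition of the free representation at `n`. -/
noncomputable def stripTo (n : V) : ∀ σ : Σ m : V, Path m n,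
    A σ.1 →ₗ[Λ] (A n × ⨁ t : Σ j : V, j ⟶ n, (freeRep (Λ := Λ) A).obj t.1)
  | ⟨_, .nil⟩ => LinearMap.inl Λ _ _
  | ⟨m, @Quiver.Path.cons _ _ _ j _ q β⟩ =>
    (LinearMap.inr Λ _ _) ∘ₗ
      (DirectSum.lof Λ (Σ j' : V, j' ⟶ n) (fun t => (freeRep (Λ := Λ) A).obj t.1) ⟨j, β⟩) ∘ₗ
      (gen A j ⟨m, q⟩)

/-- The canonical decomposition map at a vertex. -/
noncomputable def theta (n : V) :
    (freeRep (Λ := Λ) A).obj n →ₗ[Λ]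
      A n × ⨁ t : Σ j : V, j ⟶ n, (freeRep (Λ := Λ) A).obj t.1 :=
  DirectSum.toModule Λ _ _ (stripTo A n)

theorem theta_nil (n : V) (x : A n) :
    theta (Λ := Λ) A n (gen A n ⟨n, Path.nil⟩ x) = (x, 0) :=
  DirectSum.toModule_lof Λ _ _

theorem theta_cons (n : V) {m j : V} (q : Path m j) (β : j ⟶ n) (x : A m) :
    theta (Λ := Λ) A n (gen A n ⟨m, q.cons β⟩ x) =
      (0, DirectSum.lof Λ (Σ j' : V, j' ⟶ n)
        (fun t => (freeRep (Λ := Λ) A).obj t.1) ⟨j, β⟩ (gen A j ⟨m, q⟩ x)) :=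
  DirectSum.toModule_lof Λ _ _

theorem uMap_lof (X : QRep Λ fun i j : V => i ⟶ j) (i : V)
    (t : Σ j : V, j ⟶ i) (x : X.obj t.1) :
    X.uMap i (DirectSum.lof Λ (Σ j : V, j ⟶ i) (fun a => X.obj a.1) t x) = X.map t.2 x := by
  unfold QRep.uMap
  exact DirectSum.toModule_lof Λ _ _

theorem theta_injective (n : V) : Function.Injective (theta (Λ := Λ) A n) := by
  have hcomp : ((gen A n ⟨n, Path.nil⟩).coprod
      ((freeRep (Λ := Λ) A).uMap n)).comp (theta A n) = LinearMap.id := by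
    apply DirectSum.linearMap_ext
    intro σ
    ext x
    obtain ⟨m, p⟩ := σ
    cases p with
    | nil =>
      show ((gen A n ⟨n, Path.nil⟩).coprod ((freeRep (Λ := Λ) A).uMap n))
        (theta A n (gen A n ⟨n, Path.nil⟩ x)) = gen A n ⟨n, Path.nil⟩ x
      rw [theta_nil]
      simp [LinearMap.coprod_apply]
    | @cons j _ q β =>
      show ((gen A n ⟨n, Path.nil⟩).coprod ((freeRep (Λ := Λ) A).uMap n))
        (theta A n (gen A n ⟨m, q.cons β⟩ x)) = gen A n ⟨m, q.cons β⟩ x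
      rw [theta_cons]
      simp only [LinearMap.coprod_apply, map_zero, zero_add]
      rw [uMap_lof, freeRep_map_lof]
  intro a b hab
  have ha := LinearMap.congr_fun hcomp a
  have hb := LinearMap.congr_fun hcomp b
  simp only [LinearMap.comp_apply, LinearMap.id_apply] at ha hb
  rw [← ha, ← hb, hab]

/-- The free representation is separated monic. -/
theorem freeRep_sepMonic : QRep.SeparatedMonic (freeRep (Λ := Λ) A) := by
  intro n
  have hcomp : (((LinearMap.snd Λ _ _).comp (theta A n)).comp
      ((freeRep (Λ := Λ) A).uMap n)) = LinearMap.id := by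
    apply DirectSum.linearMap_ext
    intro t
    apply DirectSum.linearMap_ext
    intro σ
    refine LinearMap.ext fun x => ?_
    obtain ⟨j, β⟩ := t
    obtain ⟨m, q⟩ := σ
    show (LinearMap.snd Λ _ _) (theta A n ((freeRep (Λ := Λ) A).uMap n
      (DirectSum.lof Λ (Σ j' : V, j' ⟶ n) (fun a => (freeRep (Λ := Λ) A).obj a.1) ⟨j, β⟩
        (gen A j ⟨m, q⟩ x))))
      = DirectSum.lof Λ (Σ j' : V, j' ⟶ n) (fun a => (freeRep (Λ := Λ) A).obj a.1) ⟨j, β⟩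
        (gen A j ⟨m, q⟩ x)
    rw [uMap_lof, freeRep_map_lof, theta_cons]
    rfl
  intro a b hab
  have ha := LinearMap.congr_fun hcomp a
  have hb := LinearMap.congr_fun hcomp b
  simp only [LinearMap.comp_apply, LinearMap.id_apply] at ha hb
  rw [← ha, ← hb, hab]

/-- The second component of `theta`-based decomposition, mapped into `X`. -/
noncomputable def psiMap (X : QRep Λ fun i j : V => i ⟶ j)
    (χ : ∀ n, A n →ₗ[Λ] X.obj n) (n : V) :
    (⨁ t : Σ j : V, j ⟶ n, (freeRep (Λ := Λ) A).obj t.1) →ₗ[Λ] X.obj n :=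
  DirectSum.toModule Λ _ _ fun t => (X.map t.2).comp (assembleApp A X χ t.1)

theorem psiMap_lof (X : QRep Λ fun i j : V => i ⟶ j)
    (χ : ∀ n, A n →ₗ[Λ] X.obj n) (n : V) (t : Σ j : V, j ⟶ n)
    (y : (freeRep (Λ := Λ) A).obj t.1) :
    psiMap A X χ n (DirectSum.lof Λ _ (fun t => (freeRep (Λ := Λ) A).obj t.1) t y)
      = X.map t.2 (assembleApp A X χ t.1 y) :=
  DirectSum.toModule_lof Λ _ _

/-- The key decomposition identity. -/
theorem star (X : QRep Λ fun i j : V => i ⟶ j)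
    (χ : ∀ n, A n →ₗ[Λ] X.obj n) (n : V) (x : (freeRep (Λ := Λ) A).obj n) :
    assembleApp A X χ n x =
      χ n (theta A n x).1 + psiMap A X χ n (theta A n x).2 := by
  have : assembleApp A X χ n = ((χ n).comp ((LinearMap.fst Λ _ _).comp (theta A n)))
      + ((psiMap A X χ n).comp ((LinearMap.snd Λ _ _).comp (theta A n))) := by
    apply DirectSum.linearMap_ext
    intro σ
    ext y
    obtain ⟨m, p⟩ := σ
    show assembleApp A X χ n (gen A n ⟨m, p⟩ y) =
      (χ n (theta A n (gen A n ⟨m, p⟩ y)).1 + psiMap A X χ n (theta A n (gen A n ⟨m, p⟩ y)).2)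
    cases p with
    | nil =>
      rw [assembleApp_lof, theta_nil]
      simp
    | @cons j _ q β =>
      rw [assembleApp_lof, theta_cons]
      simp only [map_zero, zero_add]
      rw [psiMap_lof, assembleApp_lof, pathMap_cons]
      rfl
  calc assembleApp A X χ n x
      = (((χ n).comp ((LinearMap.fst Λ _ _).comp (theta A n)))
        + ((psiMap A X χ n).comp ((LinearMap.snd Λ _ _).comp (theta A n)))) x := by rw [← this]
    _ = _ := rfl

/-- Range of a `toModule` map. -/
theorem range_toModule {ι : Type} {Mf : ι → Type} [∀ i, AddCommGroup (Mf i)]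
    [∀ i, Module Λ (Mf i)] {N : Type} [AddCommGroup N] [Module Λ N]
    (φ : ∀ i, Mf i →ₗ[Λ] N) :
    LinearMap.range (DirectSum.toModule Λ ι N φ) = ⨆ i, LinearMap.range (φ i) := by
  apply le_antisymm
  · rintro _ ⟨x, rfl⟩
    induction x using DirectSum.induction_on with
    | zero => simp
    | of i y =>
      rw [← DirectSum.lof_eq_of Λ, DirectSum.toModule_lof]
      exact Submodule.mem_iSup_of_mem i (LinearMap.mem_range_self _ y)
    | add a b ha hb =>
      rw [map_add]
      exact add_mem ha hb
  · apply iSup_le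
    rintro i _ ⟨y, rfl⟩
    exact ⟨DirectSum.lof Λ ι Mf i y, DirectSum.toModule_lof Λ _ _⟩

theorem range_assembleApp (X : QRep Λ fun i j : V => i ⟶ j)
    (χ : ∀ n, A n →ₗ[Λ] X.obj n) (i : V) :
    LinearMap.range (assembleApp A X χ i)
      = ⨆ σ : Σ m : V, Path m i, LinearMap.range ((pathMap X σ.2).comp (χ σ.1)) := by
  apply le_antisymm
  · rintro _ ⟨x, rfl⟩
    induction x using DirectSum.induction_on with
    | zero =>
      show assembleApp A X χ i 0 ∈ _
      rw [map_zero]; exact zero_mem _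
    | of σ y =>
      refine Submodule.mem_iSup_of_mem σ ⟨y, ?_⟩
      show (pathMap X σ.2).comp (χ σ.1) y
        = assembleApp A X χ i (DirectSum.of (fun σ : Σ m : V, Path m i => A σ.1) σ y)
      rw [← DirectSum.lof_eq_of Λ]
      exact (assembleApp_lof A X χ i σ y).symm
    | add a b ha hb =>
      have := add_mem ha hb
      convert this using 1
      exact map_add _ _ _
  · apply iSup_le
    rintro σ _ ⟨y, rfl⟩
    exact ⟨gen A i σ y, assembleApp_lof A X χ i σ y⟩

theorem range_psiMap (X : QRep Λ fun i j : V => i ⟶ j)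
    (χ : ∀ n, A n →ₗ[Λ] X.obj n) (n : V) :
    LinearMap.range (psiMap A X χ n)
      = ⨆ t : Σ j : V, j ⟶ n,
          LinearMap.range ((X.map t.2).comp (assembleApp A X χ t.1)) := by
  apply le_antisymm
  · rintro _ ⟨x, rfl⟩
    induction x using DirectSum.induction_on with
    | zero => simp
    | of t y =>
      refine Submodule.mem_iSup_of_mem t ⟨y, ?_⟩
      show (X.map t.2).comp (assembleApp A X χ t.1) y
        = psiMap A X χ n (DirectSum.of (fun t : Σ j : V, j ⟶ n =>
            (freeRep (Λ := Λ) A).obj t.1) t y)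
      rw [← DirectSum.lof_eq_of Λ]
      exact (psiMap_lof A X χ n t y).symm
    | add a b ha hb =>
      rw [map_add]
      exact add_mem ha hb
  · apply iSup_le
    rintro t _ ⟨y, rfl⟩
    exact ⟨DirectSum.lof Λ _ (fun t : Σ j : V, j ⟶ n => (freeRep (Λ := Λ) A).obj t.1) t y,
      psiMap_lof A X χ n t y⟩

end FreeRep

end SESAux


/-! ### The recursive choice of branch summands and the main induction -/

namespace SESAux

section Main

open Quiver DirectSum Submodule

open scoped Classical

variable {Λ : Type} [Ring Λ] {V : Type} [Quiver.{0} V]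

noncomputable def rgeS (X : QRep Λ fun i j : V => i ⟶ j)
    (prior : ∀ m : V, Submodule Λ (X.obj m)) (j : V) : Submodule Λ (X.obj j) :=
  ⨆ σ : Σ m : V, Path m j, Submodule.map (pathMap X σ.2) (prior σ.1)

noncomputable def uatS (X : QRep Λ fun i j : V => i ⟶ j)
    (prior : ∀ m : V, Submodule Λ (X.obj m)) (n : V) : Submodule Λ (X.obj n) :=
  ⨆ t : Σ j : V, j ⟶ n, Submodule.map (X.map t.2) (rgeS X prior t.1)

theorem rgeS_eq (X : QRep Λ fun i j : V => i ⟶ j)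
    (prior : ∀ m : V, Submodule Λ (X.obj m)) (n : V) :
    rgeS X prior n = uatS X prior n ⊔ prior n := by
  apply le_antisymm
  · apply iSup_le
    rintro ⟨m, p⟩
    cases p with
    | nil =>
      rw [pathMap_nil, Submodule.map_id]
      exact le_sup_right
    | @cons j _ q β =>
      rw [pathMap_cons, Submodule.map_comp]
      refine le_trans ?_ le_sup_left
      refine le_trans (Submodule.map_mono ?_)
        (le_iSup (fun t : Σ j : V, j ⟶ n => Submodule.map (X.map t.2) (rgeS X prior t.1))
          ⟨j, β⟩)
      exact le_iSup (fun σ : Σ m : V, Path m j =>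
        Submodule.map (pathMap X σ.2) (prior σ.1)) ⟨m, q⟩
  · apply sup_le
    · apply iSup_le
      rintro ⟨j, β⟩
      simp only [rgeS, Submodule.map_iSup]
      apply iSup_le
      rintro ⟨m, q⟩
      rw [← Submodule.map_comp, ← pathMap_cons]
      exact le_iSup (fun σ : Σ m : V, Path m n =>
        Submodule.map (pathMap X σ.2) (prior σ.1)) ⟨m, q.cons β⟩
    · refine le_trans ?_ (le_iSup (fun σ : Σ m : V, Path m n =>
        Submodule.map (pathMap X σ.2) (prior σ.1)) ⟨n, Path.nil⟩)
      rw [pathMap_nil, Submodule.map_id]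

theorem uatS_congr (hacyc : ∀ (i : V) (p : Quiver.Path i i), p = Quiver.Path.nil)
    (X : QRep Λ fun i j : V => i ⟶ j)
    {prior prior' : ∀ m : V, Submodule Λ (X.obj m)} (n : V)
    (h : ∀ m, relV m n → prior m = prior' m) : uatS X prior n = uatS X prior' n := by
  simp only [uatS]
  apply iSup_congr
  rintro ⟨j, β⟩
  congr 1
  simp only [rgeS]
  apply iSup_congr
  rintro ⟨m, q⟩
  rw [h m (relV_of_path_hom hacyc q β)]

variable (hacyc : ∀ (i : V) (p : Quiver.Path i i), p = Quiver.Path.nil)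
variable [Fintype V] (M : QRep Λ fun i j : V => i ⟶ j)

/-- Choice of a maximal projective direct summand complementing `U`. -/
noncomputable def chooseB (n : V) (U : Submodule Λ (M.obj n)) : Submodule Λ (M.obj n) :=
  if h : ∃ Bn : Submodule Λ (M.obj n), Module.Projective Λ ↥Bn ∧ U ⊓ Bn = ⊥ ∧
      ∃ R, IsCompl (U ⊔ Bn) R ∧ QRep.NoProjSummand Λ ↥R then h.choose else ⊥

/-- The family of branch summands, chosen by well-founded recursion over the quiver. -/
noncomputable def Bfam : ∀ n : V, Submodule Λ (M.obj n) :=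
  (relV_wf hacyc).fix fun n ih =>
    chooseB M n (uatS M (fun m => if h : relV m n then ih m h else ⊥) n)

theorem Bfam_eq (n : V) :
    Bfam hacyc M n = chooseB M n (uatS M (Bfam hacyc M) n) := by
  have h1 : Bfam hacyc M n
      = chooseB M n (uatS M (fun m => if h : relV m n then Bfam hacyc M m else ⊥) n) :=
    WellFounded.fix_eq _ _ _
  rw [h1]
  congr 1
  apply uatS_congr hacyc
  intro m hm
  rw [dif_pos hm]

/-- The canonical map from the free representation into `M`. -/
noncomputable def PhiH : QRep.Hom (freeRep (Λ := Λ) (fun m => ↥(Bfam hacyc M m))) M :=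
  assembleHom (fun m => ↥(Bfam hacyc M m)) M (fun m => (Bfam hacyc M m).subtype)

theorem range_phi (j : V) :
    LinearMap.range (assembleApp (fun m => ↥(Bfam hacyc M m)) M
      (fun m => (Bfam hacyc M m).subtype) j) = rgeS M (Bfam hacyc M) j := by
  rw [range_assembleApp]
  simp only [rgeS]
  apply iSup_congr
  intro σ
  rw [LinearMap.range_comp, Submodule.range_subtype]

theorem range_psi (n : V) :
    LinearMap.range (psiMap (fun m => ↥(Bfam hacyc M m)) M
      (fun m => (Bfam hacyc M m).subtype) n) = uatS M (Bfam hacyc M) n := by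
  rw [range_psiMap]
  simp only [uatS]
  apply iSup_congr
  intro t
  rw [LinearMap.range_comp, range_phi]

theorem psi_inj (hM : QRep.SeparatedMonic M) (n : V)
    (hIH : ∀ (j : V) (β : j ⟶ n), Function.Injective ((PhiH hacyc M).app j)) :
    Function.Injective (psiMap (fun m => ↥(Bfam hacyc M m)) M
      (fun m => (Bfam hacyc M m).subtype) n) := by
  set bigPhi : (⨁ t : Σ j : V, j ⟶ n,
        (freeRep (Λ := Λ) (fun m => ↥(Bfam hacyc M m))).obj t.1) →ₗ[Λ]
      (⨁ t : Σ j : V, j ⟶ n, M.obj t.1) :=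
    DirectSum.toModule Λ _ _ (fun t =>
      (DirectSum.lof Λ (Σ j : V, j ⟶ n) (fun t => M.obj t.1) t).comp
        (assembleApp (fun m => ↥(Bfam hacyc M m)) M
          (fun m => (Bfam hacyc M m).subtype) t.1)) with hbigPhi
  have hcomp : (M.uMap n).comp bigPhi
      = psiMap (fun m => ↥(Bfam hacyc M m)) M (fun m => (Bfam hacyc M m).subtype) n := by
    apply DirectSum.linearMap_ext
    intro t
    ext y
    show M.uMap n (bigPhi (DirectSum.lof Λ (Σ j : V, j ⟶ n)
        (fun t => (freeRep (Λ := Λ) (fun m => ↥(Bfam hacyc M m))).obj t.1) t y))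
      = psiMap (fun m => ↥(Bfam hacyc M m)) M (fun m => (Bfam hacyc M m).subtype) n
          (DirectSum.lof Λ (Σ j : V, j ⟶ n)
            (fun t => (freeRep (Λ := Λ) (fun m => ↥(Bfam hacyc M m))).obj t.1) t y)
    rw [hbigPhi, DirectSum.toModule_lof, psiMap_lof]
    simp only [LinearMap.comp_apply]
    rw [uMap_lof]
  have hbig : ∀ x, bigPhi x = 0 → x = 0 := by
    intro x hx
    have hcompt : ∀ t : Σ j : V, j ⟶ n,
        (DirectSum.component Λ (Σ j : V, j ⟶ n) (fun t => M.obj t.1) t).comp bigPhi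
          = ((assembleApp (fun m => ↥(Bfam hacyc M m)) M
              (fun m => (Bfam hacyc M m).subtype) t.1).comp
            (DirectSum.component Λ (Σ j : V, j ⟶ n)
              (fun t => (freeRep (Λ := Λ) (fun m => ↥(Bfam hacyc M m))).obj t.1) t)) := by
      intro t
      apply DirectSum.linearMap_ext
      intro t'
      ext y
      simp only [LinearMap.comp_apply]
      rw [hbigPhi, DirectSum.toModule_lof]
      simp only [LinearMap.comp_apply]
      rcases eq_or_ne t' t with rfl | hne
      · rw [DirectSum.component.lof_self, DirectSum.component.lof_self]
      · rw [DirectSum.component.of, DirectSum.component.of, dif_neg hne, dif_neg hne,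
          map_zero]
    have hzero : ∀ t : Σ j : V, j ⟶ n,
        (DirectSum.component Λ (Σ j : V, j ⟶ n)
          (fun t => (freeRep (Λ := Λ) (fun m => ↥(Bfam hacyc M m))).obj t.1) t) x = 0 := by
      intro t
      have h4 := LinearMap.congr_fun (hcompt t) x
      simp only [LinearMap.comp_apply] at h4
      rw [hx, map_zero] at h4
      apply hIH t.1 t.2
      rw [map_zero]
      exact h4.symm
    exact DirectSum.ext_component Λ (fun t => by rw [hzero t, map_zero])
  have hbig' : Function.Injective bigPhi := (injective_iff_map_eq_zero bigPhi).mpr hbig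
  rw [← hcomp, LinearMap.coe_comp]
  exact (hM n).comp hbig'

theorem dfs_injective {ι : Type} [Finite ι] {Mf : ι → Type} [∀ i, AddCommGroup (Mf i)]
    [∀ i, Module Λ (Mf i)] (h : ∀ i, Module.Injective Λ (Mf i)) :
    Module.Injective Λ (⨁ i, Mf i) := by
  haveI : Fintype ι := Fintype.ofFinite _
  exact injective_of_equiv (DirectSum.linearEquivFunOnFintype Λ ι Mf) (injective_pi h)

theorem freeObj_injective (hacyc : ∀ (i : V) (p : Quiver.Path i i), p = Quiver.Path.nil)
    [∀ i j : V, Finite (i ⟶ j)]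
    (A : V → Type) [∀ n, AddCommGroup (A n)] [∀ n, Module Λ (A n)] (j : V)
    (hA : ∀ m : V, Nonempty (Path m j) → Module.Injective Λ (A m)) :
    Module.Injective Λ ((freeRep (Λ := Λ) A).obj j) := by
  haveI : ∀ m : V, Finite (Path m j) := fun m => path_finite hacyc m j
  haveI : Finite (Σ m : V, Path m j) := inferInstance
  exact dfs_injective (fun σ : Σ m : V, Path m j => hA σ.1 ⟨σ.2⟩)

theorem isArtinian_module (k : Type) [Field k] [Algebra k Λ] [FiniteDimensional k Λ]
    {X : Type} [AddCommGroup X] [Module Λ X] (hfin : Module.Finite Λ X) :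
    IsArtinian Λ X := by
  haveI : IsArtinianRing Λ := by
    haveI : IsArtinian k Λ := inferInstance
    exact isArtinian_of_tower k this
  haveI := hfin
  infer_instance

theorem finite_submodule (k : Type) [Field k] [Algebra k Λ] [FiniteDimensional k Λ]
    {X : Type} [AddCommGroup X] [Module Λ X] (hfin : Module.Finite Λ X)
    (p : Submodule Λ X) : Module.Finite Λ ↥p := by
  haveI : IsNoetherianRing Λ := by
    haveI : IsNoetherian k Λ := inferInstance
    exact isNoetherian_of_tower Λ (isNoetherian_of_tower k this)
  haveI := hfin
  haveI : IsNoetherian Λ X := inferInstance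
  exact Module.Finite.iff_fg.mpr (IsNoetherian.noetherian p)

theorem main_induction
    (k : Type) [Field k] [Algebra k Λ] [FiniteDimensional k Λ]
    (hself : Module.Injective Λ Λ)
    [∀ i j : V, Finite (i ⟶ j)]
    (hfin : ∀ i, Module.Finite Λ (M.obj i))
    (hM : QRep.SeparatedMonic M) (n : V) :
    Function.Injective ((PhiH hacyc M).app n) ∧
      Module.Projective Λ ↥(Bfam hacyc M n) ∧
      uatS M (Bfam hacyc M) n ⊓ Bfam hacyc M n = ⊥ ∧
      ∃ R, IsCompl (uatS M (Bfam hacyc M) n ⊔ Bfam hacyc M n) R ∧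
        QRep.NoProjSummand Λ ↥R := by
  refine WellFounded.induction (C := fun n : V =>
    Function.Injective ((PhiH hacyc M).app n) ∧
      Module.Projective Λ ↥(Bfam hacyc M n) ∧
      uatS M (Bfam hacyc M) n ⊓ Bfam hacyc M n = ⊥ ∧
      ∃ R, IsCompl (uatS M (Bfam hacyc M) n ⊔ Bfam hacyc M n) R ∧
        QRep.NoProjSummand Λ ↥R) (relV_wf hacyc) n ?_
  clear n
  intro n IH
  have hIHinj : ∀ (j : V) (β : j ⟶ n), Function.Injective ((PhiH hacyc M).app j) :=
    fun j β => (IH j (relV_of_hom hacyc β)).1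
  have hBinj : ∀ m : V, relV m n → Module.Injective Λ ↥(Bfam hacyc M m) := by
    intro m hm
    exact injective_of_fg_projective hself (finite_submodule k (hfin m) _) ((IH m hm).2.1)
  have hψ := psi_inj hacyc M hM n hIHinj
  have hUinj : Module.Injective Λ ↥(uatS M (Bfam hacyc M) n) := by
    have hdomInj : Module.Injective Λ (⨁ t : Σ j : V, j ⟶ n,
        (freeRep (Λ := Λ) (fun m => ↥(Bfam hacyc M m))).obj t.1) := by
      apply dfs_injective
      intro t
      apply freeObj_injective hacyc
      intro m hmp
      obtain ⟨p⟩ := hmp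
      exact hBinj m (relV_of_path_hom hacyc p t.2)
    have h6 := injective_of_equiv (LinearEquiv.ofInjective _ hψ).symm hdomInj
    rwa [range_psi] at h6
  haveI : IsArtinian Λ (M.obj n) := isArtinian_module k (hfin n)
  have hex : ∃ Bn : Submodule Λ (M.obj n), Module.Projective Λ ↥Bn ∧
      uatS M (Bfam hacyc M) n ⊓ Bn = ⊥ ∧
      ∃ R, IsCompl (uatS M (Bfam hacyc M) n ⊔ Bn) R ∧ QRep.NoProjSummand Λ ↥R :=
    exists_spec _ (exists_isCompl_of_injective _ hUinj)
  have hBeq : Bfam hacyc M n = hex.choose := by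
    rw [Bfam_eq hacyc M n, chooseB, dif_pos hex]
  have hspec := hex.choose_spec
  rw [← hBeq] at hspec
  obtain ⟨hproj, hinf, hR⟩ := hspec
  refine ⟨?_, hproj, hinf, hR⟩
  show Function.Injective (assembleApp (fun m => ↥(Bfam hacyc M m)) M
    (fun m => (Bfam hacyc M m).subtype) n)
  have hker : ∀ x, assembleApp (fun m => ↥(Bfam hacyc M m)) M
      (fun m => (Bfam hacyc M m).subtype) n x = 0 → x = 0 := by
    intro x hx
    rw [star] at hx
    have hmem2 : psiMap (fun m => ↥(Bfam hacyc M m)) M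
        (fun m => (Bfam hacyc M m).subtype) n
          (theta (fun m => ↥(Bfam hacyc M m)) n x).2 ∈ uatS M (Bfam hacyc M) n := by
      rw [← range_psi hacyc M n]
      exact LinearMap.mem_range_self _ _
    have h1 : ((Bfam hacyc M n).subtype (theta (fun m => ↥(Bfam hacyc M m)) n x).1)
        ∈ uatS M (Bfam hacyc M) n ⊓ Bfam hacyc M n := by
      constructor
      · have heq : (Bfam hacyc M n).subtype (theta (fun m => ↥(Bfam hacyc M m)) n x).1
            = - psiMap (fun m => ↥(Bfam hacyc M m)) M
                (fun m => (Bfam hacyc M m).subtype) n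
                  (theta (fun m => ↥(Bfam hacyc M m)) n x).2 := by
          rw [add_eq_zero_iff_eq_neg] at hx
          exact hx
        rw [heq]
        exact neg_mem hmem2
      · exact Submodule.coe_mem _
    rw [hinf] at h1
    have ha : (theta (fun m => ↥(Bfam hacyc M m)) n x).1 = 0 := by
      have h7 := (Submodule.mem_bot Λ).mp h1
      exact Subtype.ext h7
    have hb : (theta (fun m => ↥(Bfam hacyc M m)) n x).2 = 0 := by
      apply hψ
      rw [map_zero]
      rw [ha] at hx
      simpa using hx
    apply theta_injective (fun m => ↥(Bfam hacyc M m)) n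
    rw [map_zero]
    have : theta (fun m => ↥(Bfam hacyc M m)) n x
        = ((theta (fun m => ↥(Bfam hacyc M m)) n x).1,
           (theta (fun m => ↥(Bfam hacyc M m)) n x).2) := rfl
    rw [this, ha, hb]
    rfl
  exact (injective_iff_map_eq_zero _).mpr hker

/-- The quotient representation `N = M / im Φ`. -/
noncomputable def quotRep : QRep Λ fun i j : V => i ⟶ j where
  obj i := M.obj i ⧸ LinearMap.range ((PhiH hacyc M).app i)
  map {i j} β := Submodule.mapQ _ _ (M.map β) (by
    rintro x ⟨y, rfl⟩
    have h := LinearMap.congr_fun ((PhiH hacyc M).comm β) y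
    simp only [LinearMap.comp_apply] at h
    simp only [Submodule.mem_comap]
    exact ⟨_, h.symm⟩)

/-- The quotient map `M → N`. -/
noncomputable def quotHom : QRep.Hom M (quotRep hacyc M) where
  app i := (LinearMap.range ((PhiH hacyc M).app i)).mkQ
  comm {i j} β := by
    have hle : LinearMap.range ((PhiH hacyc M).app i)
        ≤ Submodule.comap (M.map β) (LinearMap.range ((PhiH hacyc M).app j)) := by
      rintro x ⟨y, rfl⟩
      have h := LinearMap.congr_fun ((PhiH hacyc M).comm β) y
      simp only [LinearMap.comp_apply] at h
      simp only [Submodule.mem_comap]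
      exact ⟨_, h.symm⟩
    exact Submodule.mapQ_mkQ _ _ (M.map β) (h := hle)

end Main

end SESAux


/-- Every separated monic representation `M` of a finite acyclic
quiver over a selfinjective algebra admits a short exact sequence
`0 → I → M → N → 0` with `I` a projective object of `Gproj ΛQ` and no branch of `N`
having a nonzero projective direct summand. -/
theorem exists_ses_projective_and_no_proj_summand
    (k : Type) [Field k] (Λ : Type) [Ring Λ] [Algebra k Λ] [FiniteDimensional k Λ]
    (hself : Module.Injective Λ Λ)
    {V : Type} [Fintype V] {E : V → V → Type} [∀ i j, Fintype (E i j)]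
    (hacyc : QRep.Acyclic E)
    (M : QRep Λ E) (hfin : ∀ i, Module.Finite Λ (M.obj i))
    (hM : QRep.SeparatedMonic M) :
    ∃ (I N : QRep Λ E) (f : QRep.Hom I M) (g : QRep.Hom M N),
      QRep.Projective I ∧ QRep.SeparatedMonic I ∧
      (∀ i, Function.Injective (f.app i)) ∧
      (∀ i, Function.Surjective (g.app i)) ∧
      (∀ i, LinearMap.range (f.app i) = LinearMap.ker (g.app i)) ∧
      (∀ i, QRep.NoProjSummand Λ (N.obj i)) := by
  letI : Quiver.{0} V := ⟨E⟩
  letI : ∀ i j : V, Finite (i ⟶ j) := fun i j => inferInstanceAs (Finite (E i j))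
  have hacyc' : ∀ (i : V) (p : Quiver.Path i i), p = Quiver.Path.nil := fun i p => hacyc i p
  have main := fun n => SESAux.main_induction (k := k) hacyc' M hself hfin hM n
  refine ⟨SESAux.freeRep (fun m => ↥(SESAux.Bfam hacyc' M m)),
    SESAux.quotRep hacyc' M, SESAux.PhiH hacyc' M, SESAux.quotHom hacyc' M,
    ?_, ?_, ?_, ?_, ?_, ?_⟩
  · exact SESAux.freeRep_projective _ (fun n => (main n).2.1)
  · exact SESAux.freeRep_sepMonic _
  · exact fun i => (main i).1
  · exact fun i => Submodule.mkQ_surjective _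
  · exact fun i => (Submodule.ker_mkQ _).symm
  · intro i
    have hrange_eq : LinearMap.range ((SESAux.PhiH hacyc' M).app i)
        = SESAux.uatS M (SESAux.Bfam hacyc' M) i ⊔ SESAux.Bfam hacyc' M i := by
      have h1 : LinearMap.range ((SESAux.PhiH hacyc' M).app i)
          = SESAux.rgeS M (SESAux.Bfam hacyc' M) i := SESAux.range_phi hacyc' M i
      rw [h1, SESAux.rgeS_eq]
    obtain ⟨R, hcompl, hnps⟩ := (main i).2.2.2
    rw [← hrange_eq] at hcompl
    exact SESAux.noProjSummand_of_equiv
      (Submodule.quotientEquivOfIsCompl _ R hcompl) hnps
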